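/- Let M₁ and M₂ be partial matchings between L and T whose symmetric difference is a single augmenting alternating path (so |M₂| = |M₁| + 1), and let y₁, y₂ be the corresponding vertices of the face F of the assignment pseudoflow polyhedron. Let q = |M₁ ∩ M₂| and k = |M₁ \ M₂|. Define a cost vector c by c_{ij} = 1 if (i,j) ∈ M₁, c_{ij} = k/(k+1) if (i,j) ∈ M₂ \ M₁, c_{ij} = -1 otherwise, and 0 on all slack arcs. Then c^T y₁ = c^T y₂ = q + k, and c^T y₃ < q + k for every vertex y₃ of F distinct from y₁ and y₂. Consequently y₁ and y₂ are endpoints of an edge of F. -/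

import Mathlib

def assignFace (nn : ℕ) : Set ((Fin nn → Fin nn → ℝ) × (Fin nn → ℝ) × (Fin nn → ℝ)) :=
  {p | (∀ l t, 0 ≤ p.1 l t ∧ p.1 l t ≤ 1) ∧
       (∀ l, 0 ≤ p.2.1 l) ∧ (∀ t, 0 ≤ p.2.2 t) ∧
       (∀ l, (∑ t, p.1 l t) + p.2.1 l = 1) ∧
       (∀ t, (∑ l, p.1 l t) + p.2.2 t = 1)}

def IsPartialMatching {nn : ℕ} (M : Finset (Fin nn × Fin nn)) : Prop :=
  ∀ a ∈ M, ∀ b ∈ M, a ≠ b → a.1 ≠ b.1 ∧ a.2 ≠ b.2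

/-- The point of the face `F` corresponding to a partial matching `M`. -/
noncomputable def vertexOf {nn : ℕ} (M : Finset (Fin nn × Fin nn)) :
    (Fin nn → Fin nn → ℝ) × (Fin nn → ℝ) × (Fin nn → ℝ) :=
  (fun l t => if (l, t) ∈ M then 1 else 0,
   fun l => 1 - ∑ t, if (l, t) ∈ M then (1 : ℝ) else 0,
   fun t => 1 - ∑ l, if (l, t) ∈ M then (1 : ℝ) else 0)

/-- Objective value `c ᵀ y` (slack arcs have cost `0`). -/
noncomputable def dotc {nn : ℕ} (c : Fin nn × Fin nn → ℝ)
    (p : (Fin nn → Fin nn → ℝ) × (Fin nn → ℝ) × (Fin nn → ℝ)) : ℝ :=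
  ∑ l, ∑ t, c (l, t) * p.1 l t

lemma dotc_vertexOf {nn : ℕ} (c : Fin nn × Fin nn → ℝ) (M : Finset (Fin nn × Fin nn)) :
    dotc c (vertexOf M) = ∑ a ∈ M, c a := by
  unfold dotc vertexOf
  simp only [mul_ite, mul_one, mul_zero]
  rw [← Finset.sum_product', ← Finset.sum_filter]
  congr 1
  ext a
  simp [Finset.mem_filter]

lemma matching_row {nn : ℕ} {M : Finset (Fin nn × Fin nn)} (hM : IsPartialMatching M)
    {l t t' : Fin nn} (h : (l, t) ∈ M) (h' : (l, t') ∈ M) : t = t' := by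
  by_contra hne
  exact (hM _ h _ h' (by simp [hne])).1 rfl

lemma matching_col {nn : ℕ} {M : Finset (Fin nn × Fin nn)} (hM : IsPartialMatching M)
    {l l' t : Fin nn} (h : (l, t) ∈ M) (h' : (l', t) ∈ M) : l = l' := by
  by_contra hne
  exact (hM _ h _ h' (by simp [hne])).2 rfl

lemma rowsum_le_one {nn : ℕ} {M : Finset (Fin nn × Fin nn)} (hM : IsPartialMatching M)
    (l : Fin nn) : (∑ t, if (l, t) ∈ M then (1 : ℝ) else 0) ≤ 1 := by
  by_cases h : ∃ t₀, (l, t₀) ∈ M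
  · obtain ⟨t₀, ht₀⟩ := h
    calc (∑ t, if (l, t) ∈ M then (1 : ℝ) else 0)
        ≤ ∑ t, if t = t₀ then (1 : ℝ) else 0 := by
          refine Finset.sum_le_sum fun t _ => ?_
          by_cases hm : (l, t) ∈ M
          · rw [if_pos hm, if_pos (matching_row hM hm ht₀)]
          · rw [if_neg hm]; positivity
      _ = 1 := by simp
  · push_neg at h
    simp [h]

lemma colsum_le_one {nn : ℕ} {M : Finset (Fin nn × Fin nn)} (hM : IsPartialMatching M)
    (t : Fin nn) : (∑ l, if (l, t) ∈ M then (1 : ℝ) else 0) ≤ 1 := by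
  by_cases h : ∃ l₀, (l₀, t) ∈ M
  · obtain ⟨l₀, hl₀⟩ := h
    calc (∑ l, if (l, t) ∈ M then (1 : ℝ) else 0)
        ≤ ∑ l, if l = l₀ then (1 : ℝ) else 0 := by
          refine Finset.sum_le_sum fun l _ => ?_
          by_cases hm : (l, t) ∈ M
          · rw [if_pos hm, if_pos (matching_col hM hm hl₀)]
          · rw [if_neg hm]; positivity
      _ = 1 := by simp
  · push_neg at h
    simp [h]

lemma vertexOf_mem {nn : ℕ} {M : Finset (Fin nn × Fin nn)} (hM : IsPartialMatching M) :
    vertexOf M ∈ assignFace nn := by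
  refine ⟨fun l t => ?_, fun l => ?_, fun t => ?_, fun l => ?_, fun t => ?_⟩
  · dsimp [vertexOf]; split <;> norm_num
  · dsimp [vertexOf]; linarith [rowsum_le_one hM l]
  · dsimp [vertexOf]; linarith [colsum_le_one hM t]
  · dsimp [vertexOf]; ring
  · dsimp [vertexOf]; ring

lemma convex_assignFace (nn : ℕ) : Convex ℝ (assignFace nn) := by
  rintro p hp q hq a b ha hb hab
  obtain ⟨hp1, hp2, hp3, hp4, hp5⟩ := hp
  obtain ⟨hq1, hq2, hq3, hq4, hq5⟩ := hq
  refine ⟨fun l t => ?_, fun l => ?_, fun t => ?_, fun l => ?_, fun t => ?_⟩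
  · constructor
    · have := (hp1 l t).1; have := (hq1 l t).1
      simp only [Prod.fst_add, Prod.smul_fst, Pi.add_apply, Pi.smul_apply, smul_eq_mul]
      nlinarith
    · have := (hp1 l t).2; have := (hq1 l t).2
      simp only [Prod.fst_add, Prod.smul_fst, Pi.add_apply, Pi.smul_apply, smul_eq_mul]
      nlinarith
  · have := hp2 l; have := hq2 l
    simp only [Prod.snd_add, Prod.smul_snd, Prod.fst_add, Prod.smul_fst, Pi.add_apply,
      Pi.smul_apply, smul_eq_mul]
    nlinarith
  · have := hp3 t; have := hq3 t
    simp only [Prod.snd_add, Prod.smul_snd, Pi.add_apply, Pi.smul_apply, smul_eq_mul]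
    nlinarith
  · have h1 := hp4 l; have h2 := hq4 l
    simp only [Prod.fst_add, Prod.smul_fst, Prod.snd_add, Prod.smul_snd, Pi.add_apply,
      Pi.smul_apply, smul_eq_mul, Finset.sum_add_distrib]
    rw [← Finset.mul_sum, ← Finset.mul_sum]
    nlinarith
  · have h1 := hp5 t; have h2 := hq5 t
    simp only [Prod.fst_add, Prod.smul_fst, Prod.snd_add, Prod.smul_snd, Pi.add_apply,
      Pi.smul_apply, smul_eq_mul, Finset.sum_add_distrib]
    rw [← Finset.mul_sum, ← Finset.mul_sum]
    nlinarith

lemma dotc_comb {nn : ℕ} (c : Fin nn × Fin nn → ℝ) (a b : ℝ)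
    (p q : (Fin nn → Fin nn → ℝ) × (Fin nn → ℝ) × (Fin nn → ℝ)) :
    dotc c (a • p + b • q) = a * dotc c p + b * dotc c q := by
  unfold dotc
  rw [Finset.mul_sum, Finset.mul_sum, ← Finset.sum_add_distrib]
  refine Finset.sum_congr rfl fun l _ => ?_
  rw [Finset.mul_sum, Finset.mul_sum, ← Finset.sum_add_distrib]
  refine Finset.sum_congr rfl fun t _ => ?_
  simp only [Prod.fst_add, Prod.smul_fst, Pi.add_apply, Pi.smul_apply, smul_eq_mul]
  ring

noncomputable def uPot {nn k : ℕ} (M₁ M₂ : Finset (Fin nn × Fin nn))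
    (L : Fin (k + 1) → Fin nn) (l : Fin nn) : ℝ :=
  (∑ i : Fin (k + 1), if L i = l then (i : ℝ) / (k + 1) else 0) +
  (if l ∈ (M₁ ∩ M₂).image Prod.fst then 1 else 0)

noncomputable def vPot {nn k : ℕ} (T : Fin (k + 1) → Fin nn) (t : Fin nn) : ℝ :=
  ∑ i : Fin (k + 1), if T i = t then ((k : ℝ) - i) / (k + 1) else 0

/-- if partial matchings `M₁, M₂` differ by a single augmenting
alternating path (so `|M₂| = |M₁| + 1`), `q = |M₁ ∩ M₂|`, `k = |M₁ \ M₂|`, and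
`c` is `1` on `M₁`, `k/(k+1)` on `M₂ \ M₁`, `-1` elsewhere, `0` on slacks, then
`c ᵀ y₁ = c ᵀ y₂ = q + k`, every other vertex of `F` has strictly smaller
objective, and hence `y₁, y₂` are the endpoints of an edge of `F`
(the optimal face of `c` is the segment `[y₁, y₂]`). -/
theorem augmenting_path_edge {nn k : ℕ}
    (M₁ M₂ : Finset (Fin nn × Fin nn))
    (h₁ : IsPartialMatching M₁) (h₂ : IsPartialMatching M₂)
    (L : Fin (k + 1) → Fin nn) (T : Fin (k + 1) → Fin nn)
    (hL : Function.Injective L) (hT : Function.Injective T)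
    (hnew : M₂ \ M₁ = Finset.image (fun i => (L i, T i)) Finset.univ)
    (hold : M₁ \ M₂ = Finset.image (fun i : Fin k => (L i.succ, T i.castSucc)) Finset.univ)
    (c : Fin nn × Fin nn → ℝ)
    (hc : ∀ a, c a = if a ∈ M₁ then 1 else if a ∈ M₂ then (k : ℝ) / (k + 1) else -1) :
    dotc c (vertexOf M₁) = ((M₁ ∩ M₂).card : ℝ) + k ∧
    dotc c (vertexOf M₂) = ((M₁ ∩ M₂).card : ℝ) + k ∧
    (∀ y₃ ∈ Set.extremePoints ℝ (assignFace nn), y₃ ≠ vertexOf M₁ → y₃ ≠ vertexOf M₂ →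
      dotc c y₃ < ((M₁ ∩ M₂).card : ℝ) + k) ∧
    segment ℝ (vertexOf M₁) (vertexOf M₂) =
      {y ∈ assignFace nn | ∀ z ∈ assignFace nn, dotc c z ≤ dotc c y} := by
  classical
  have hkpos : (0 : ℝ) < (k : ℝ) + 1 := by positivity
  have hmemnew : ∀ i : Fin (k + 1), (L i, T i) ∈ M₂ \ M₁ := by
    intro i; rw [hnew]; exact Finset.mem_image_of_mem _ (Finset.mem_univ i)
  have hmemold : ∀ i : Fin k, (L i.succ, T i.castSucc) ∈ M₁ \ M₂ := by
    intro i; rw [hold]; exact Finset.mem_image_of_mem _ (Finset.mem_univ i)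
  have hnew2 : ∀ i, (L i, T i) ∈ M₂ := fun i => (Finset.mem_sdiff.1 (hmemnew i)).1
  have hnew1 : ∀ i, (L i, T i) ∉ M₁ := fun i => (Finset.mem_sdiff.1 (hmemnew i)).2
  have hold1 : ∀ i : Fin k, (L i.succ, T i.castSucc) ∈ M₁ :=
    fun i => (Finset.mem_sdiff.1 (hmemold i)).1
  have hold2 : ∀ i : Fin k, (L i.succ, T i.castSucc) ∉ M₂ :=
    fun i => (Finset.mem_sdiff.1 (hmemold i)).2
  -- cardinalities
  have hcard_old : (M₁ \ M₂).card = k := by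
    rw [hold, Finset.card_image_of_injective _ ?_, Finset.card_univ, Fintype.card_fin]
    intro a b hab
    have := congrArg Prod.fst hab
    simp only at this
    exact Fin.succ_injective _ (hL this)
  have hcard_new : (M₂ \ M₁).card = k + 1 := by
    rw [hnew, Finset.card_image_of_injective _ ?_, Finset.card_univ, Fintype.card_fin]
    intro a b hab
    have := congrArg Prod.fst hab
    simp only at this
    exact hL this
  have hcard1 : (M₁.card : ℝ) = ((M₁ ∩ M₂).card : ℝ) + k := by
    have := Finset.card_inter_add_card_sdiff M₁ M₂
    rw [hcard_old] at this
    exact_mod_cast congrArg (Nat.cast : ℕ → ℝ) this.symm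
  -- conjunct 1
  have conj1 : dotc c (vertexOf M₁) = ((M₁ ∩ M₂).card : ℝ) + k := by
    rw [dotc_vertexOf, ← hcard1]
    rw [Finset.sum_congr rfl (fun a ha => by rw [hc a, if_pos ha] : ∀ a ∈ M₁, c a = 1)]
    simp
  -- conjunct 2
  have conj2 : dotc c (vertexOf M₂) = ((M₁ ∩ M₂).card : ℝ) + k := by
    rw [dotc_vertexOf]
    rw [← Finset.sum_inter_add_sum_sdiff M₂ M₁ c]
    have e1 : ∑ a ∈ M₂ ∩ M₁, c a = ((M₁ ∩ M₂).card : ℝ) := by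
      rw [Finset.sum_congr rfl
        (fun a ha => by rw [hc a, if_pos (Finset.mem_inter.1 ha).2] : ∀ a ∈ M₂ ∩ M₁, c a = 1)]
      rw [Finset.inter_comm]
      simp
    have e2 : ∑ a ∈ M₂ \ M₁, c a = (k : ℝ) := by
      rw [Finset.sum_congr rfl (fun a ha => by
        rw [hc a, if_neg (Finset.mem_sdiff.1 ha).2, if_pos (Finset.mem_sdiff.1 ha).1]
        : ∀ a ∈ M₂ \ M₁, c a = (k : ℝ) / (k + 1))]
      rw [Finset.sum_const, hcard_new, nsmul_eq_mul]
      field_simp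
      push_cast; ring
    rw [e1, e2]
  -- path nodes are not covered by M₁ ∩ M₂
  have hLq : ∀ (i : Fin (k+1)) (t : Fin nn), (L i, t) ∉ M₁ ∩ M₂ := by
    intro i t h
    obtain ⟨h1, h2⟩ := Finset.mem_inter.1 h
    have : T i = t := matching_row h₂ (hnew2 i) h2
    exact hnew1 i (this ▸ h1)
  have hTq : ∀ (i : Fin (k+1)) (l : Fin nn), (l, T i) ∉ M₁ ∩ M₂ := by
    intro i l h
    obtain ⟨h1, h2⟩ := Finset.mem_inter.1 h
    have : L i = l := matching_col h₂ (hnew2 i) h2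
    exact hnew1 i (this ▸ h1)
  set u : Fin nn → ℝ := uPot M₁ M₂ L with hu_def
  set v : Fin nn → ℝ := vPot T with hv_def
  have hLnotim : ∀ i : Fin (k+1), L i ∉ (M₁ ∩ M₂).image Prod.fst := by
    intro i hi
    obtain ⟨⟨a1, a2⟩, ha, ha2⟩ := Finset.mem_image.1 hi
    dsimp at ha2
    subst ha2
    exact hLq i a2 ha
  have huL : ∀ i : Fin (k+1), u (L i) = (i : ℝ) / (k + 1) := by
    intro i
    rw [hu_def]
    unfold uPot
    rw [if_neg (hLnotim i), add_zero]
    simp only [hL.eq_iff]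
    rw [Finset.sum_ite_eq' Finset.univ i (fun j : Fin (k+1) => (j : ℝ) / (k + 1))]
    simp
  have hvT : ∀ i : Fin (k+1), v (T i) = ((k : ℝ) - i) / (k + 1) := by
    intro i
    rw [hv_def]
    unfold vPot
    simp only [hT.eq_iff]
    rw [Finset.sum_ite_eq' Finset.univ i (fun j : Fin (k+1) => ((k : ℝ) - j) / (k + 1))]
    simp
  have hua : ∀ a ∈ M₁ ∩ M₂, u a.1 = 1 := by
    intro a ha
    rw [hu_def]
    unfold uPot
    rw [if_pos (Finset.mem_image.2 ⟨a, ha, rfl⟩)]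
    rw [Finset.sum_eq_zero, zero_add]
    intro i _
    rw [if_neg]
    intro h
    exact hLq i a.2 (by rwa [h, Prod.mk.eta])
  have hva : ∀ a ∈ M₁ ∩ M₂, v a.2 = 0 := by
    intro a ha
    rw [hv_def]
    unfold vPot
    rw [Finset.sum_eq_zero]
    intro i _
    rw [if_neg]
    intro h
    exact hTq i a.1 (by rwa [h, Prod.mk.eta])
  have hu_nonneg : ∀ l, 0 ≤ u l := by
    intro l
    rw [hu_def]; unfold uPot
    have h1 : 0 ≤ ∑ i : Fin (k+1), if L i = l then (i : ℝ) / (k + 1) else 0 :=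
      Finset.sum_nonneg fun i _ => by split <;> positivity
    have h2 : (0:ℝ) ≤ if l ∈ (M₁ ∩ M₂).image Prod.fst then 1 else 0 := by split <;> norm_num
    linarith
  have hv_nonneg : ∀ t, 0 ≤ v t := by
    intro t
    rw [hv_def]; unfold vPot
    refine Finset.sum_nonneg fun i _ => ?_
    split
    · have h1 : (i : ℝ) ≤ k := by exact_mod_cast Nat.lt_succ_iff.1 i.isLt
      have h2 : (0:ℝ) ≤ (k : ℝ) - i := by linarith
      exact div_nonneg h2 (le_of_lt hkpos)
    · exact le_refl 0
  have hsumuv : (∑ l, u l) + (∑ t, v t) = ((M₁ ∩ M₂).card : ℝ) + k := by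
    have hinj : Set.InjOn Prod.fst ((M₁ ∩ M₂ : Finset (Fin nn × Fin nn)) : Set (Fin nn × Fin nn)) := by
      intro a ha b hb hab
      by_contra hne
      exact (h₁ a (Finset.mem_inter.1 (Finset.mem_coe.1 ha)).1 b
        (Finset.mem_inter.1 (Finset.mem_coe.1 hb)).1 hne).1 hab
    have e1 : ∑ l, u l = (∑ i : Fin (k+1), (i : ℝ) / (k + 1)) + ((M₁ ∩ M₂).card : ℝ) := by
      rw [hu_def]; unfold uPot
      rw [Finset.sum_add_distrib]
      congr 1
      · rw [Finset.sum_comm]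
        refine Finset.sum_congr rfl fun i _ => ?_
        rw [Finset.sum_ite_eq Finset.univ (L i) (fun _ => (i : ℝ) / (k + 1))]
        simp
      · rw [Finset.sum_boole]
        rw [Finset.filter_univ_mem]
        rw [Finset.card_image_of_injOn hinj]
    have e2 : ∑ t, v t = ∑ i : Fin (k+1), ((k : ℝ) - i) / (k + 1) := by
      rw [hv_def]; unfold vPot
      rw [Finset.sum_comm]
      refine Finset.sum_congr rfl fun i _ => ?_
      rw [Finset.sum_ite_eq Finset.univ (T i) (fun _ => ((k : ℝ) - i) / (k + 1))]
      simp
    rw [e1, e2]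
    have e3 : (∑ i : Fin (k+1), (i : ℝ) / (k + 1)) + ∑ i : Fin (k+1), ((k : ℝ) - i) / (k + 1)
        = (k : ℝ) := by
      rw [← Finset.sum_add_distrib]
      have : ∀ i : Fin (k+1), (i : ℝ) / (k + 1) + ((k : ℝ) - i) / (k + 1) = (k : ℝ) / (k+1) := by
        intro i; field_simp; ring
      rw [Finset.sum_congr rfl fun i _ => this i]
      rw [Finset.sum_const, Finset.card_univ, Fintype.card_fin, nsmul_eq_mul]
      push_cast
      field_simp
    linarith
  have hceq : ∀ a ∈ M₁ ∪ M₂, c a = u a.1 + v a.2 := by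
    intro a ha
    by_cases ha1 : a ∈ M₁
    · by_cases ha2 : a ∈ M₂
      · rw [hc, if_pos ha1, hua a (Finset.mem_inter.2 ⟨ha1, ha2⟩),
          hva a (Finset.mem_inter.2 ⟨ha1, ha2⟩)]
        norm_num
      · have : a ∈ M₁ \ M₂ := Finset.mem_sdiff.2 ⟨ha1, ha2⟩
        rw [hold] at this
        obtain ⟨i, _, hi⟩ := Finset.mem_image.1 this
        subst hi
        rw [hc, if_pos (hold1 i)]
        rw [huL i.succ, hvT i.castSucc]
        rw [Fin.val_succ, Fin.coe_castSucc] at *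
        push_cast
        field_simp
        ring
    · have ha2 : a ∈ M₂ := (Finset.mem_union.1 ha).resolve_left ha1
      have : a ∈ M₂ \ M₁ := Finset.mem_sdiff.2 ⟨ha2, ha1⟩
      rw [hnew] at this
      obtain ⟨i, _, hi⟩ := Finset.mem_image.1 this
      subst hi
      rw [hc, if_neg ha1, if_pos ha2]
      rw [huL i, hvT i]
      field_simp
      ring
  have hclt : ∀ a, a ∉ M₁ ∪ M₂ → c a < u a.1 + v a.2 := by
    intro a ha
    rw [hc, if_neg (fun h => ha (Finset.mem_union_left _ h)),
      if_neg (fun h => ha (Finset.mem_union_right _ h))]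
    have := hu_nonneg a.1
    have := hv_nonneg a.2
    linarith
  have hcle : ∀ a : Fin nn × Fin nn, c a ≤ u a.1 + v a.2 := by
    intro a
    by_cases ha : a ∈ M₁ ∪ M₂
    · exact le_of_eq (hceq a ha)
    · exact le_of_lt (hclt a ha)
  have key : ∀ z ∈ assignFace nn, dotc c z ≤ ((M₁ ∩ M₂).card : ℝ) + k ∧
      (dotc c z = ((M₁ ∩ M₂).card : ℝ) + k →
        z ∈ segment ℝ (vertexOf M₁) (vertexOf M₂)) := by
    intro z hz
    obtain ⟨hz1, hz2, hz3, hz4, hz5⟩ := hz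
    have hrow : ∀ l, ∑ t, z.1 l t = 1 - z.2.1 l := fun l => by linarith [hz4 l]
    have hcol : ∀ t, ∑ l, z.1 l t = 1 - z.2.2 t := fun t => by linarith [hz5 t]
    have hgap : ((M₁ ∩ M₂).card : ℝ) + k - dotc c z
        = (∑ l, ∑ t, (u l + v t - c (l, t)) * z.1 l t)
          + (∑ l, u l * z.2.1 l) + (∑ t, v t * z.2.2 t) := by
      have e1 : ∀ l, ∑ t, (u l + v t - c (l, t)) * z.1 l t
          = ((∑ t, u l * z.1 l t) + (∑ t, v t * z.1 l t)) - ∑ t, c (l, t) * z.1 l t := by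
        intro l
        rw [← Finset.sum_add_distrib, ← Finset.sum_sub_distrib]
        exact Finset.sum_congr rfl fun t _ => by ring
      have e2 : ∀ l, ∑ t, u l * z.1 l t = u l - u l * z.2.1 l := by
        intro l
        rw [← Finset.mul_sum, hrow l]
        ring
      have e3 : (∑ l, ∑ t, v t * z.1 l t) = (∑ t, v t) - ∑ t, v t * z.2.2 t := by
        rw [Finset.sum_comm, ← Finset.sum_sub_distrib]
        refine Finset.sum_congr rfl fun t _ => ?_
        rw [← Finset.mul_sum, hcol t]
        ring
      simp only [e1]
      rw [Finset.sum_sub_distrib, Finset.sum_add_distrib]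
      simp only [e2]
      rw [e3, Finset.sum_sub_distrib]
      unfold dotc
      linarith [hsumuv]
    have hterm : ∀ (l t : Fin nn), 0 ≤ (u l + v t - c (l, t)) * z.1 l t := by
      intro l t
      refine mul_nonneg ?_ (hz1 l t).1
      have := hcle (l, t)
      simp only at this
      linarith
    have hS1 : 0 ≤ ∑ l, ∑ t, (u l + v t - c (l, t)) * z.1 l t :=
      Finset.sum_nonneg fun l _ => Finset.sum_nonneg fun t _ => hterm l t
    have hS2 : 0 ≤ ∑ l, u l * z.2.1 l :=
      Finset.sum_nonneg fun l _ => mul_nonneg (hu_nonneg l) (hz2 l)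
    have hS3 : 0 ≤ ∑ t, v t * z.2.2 t :=
      Finset.sum_nonneg fun t _ => mul_nonneg (hv_nonneg t) (hz3 t)
    refine ⟨by linarith, ?_⟩
    intro heq
    rw [heq] at hgap
    have hZ1 : ∀ l t, (u l + v t - c (l, t)) * z.1 l t = 0 := by
      have h0 : ∑ l, ∑ t, (u l + v t - c (l, t)) * z.1 l t = 0 := by linarith
      intro l t
      have h1 := (Finset.sum_eq_zero_iff_of_nonneg
        (fun l _ => Finset.sum_nonneg fun t _ => hterm l t)).1 h0 l (Finset.mem_univ l)
      exact (Finset.sum_eq_zero_iff_of_nonneg (fun t _ => hterm l t)).1 h1 t (Finset.mem_univ t)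
    have hZ2 : ∀ l, u l * z.2.1 l = 0 := by
      have h0 : ∑ l, u l * z.2.1 l = 0 := by linarith
      intro l
      exact (Finset.sum_eq_zero_iff_of_nonneg
        (fun l _ => mul_nonneg (hu_nonneg l) (hz2 l))).1 h0 l (Finset.mem_univ l)
    have hZ3 : ∀ t, v t * z.2.2 t = 0 := by
      have h0 : ∑ t, v t * z.2.2 t = 0 := by linarith
      intro t
      exact (Finset.sum_eq_zero_iff_of_nonneg
        (fun t _ => mul_nonneg (hv_nonneg t) (hz3 t))).1 h0 t (Finset.mem_univ t)
    have hsupp : ∀ l t, (l, t) ∉ M₁ ∪ M₂ → z.1 l t = 0 := by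
      intro l t h
      rcases mul_eq_zero.1 (hZ1 l t) with h' | h'
      · exfalso
        have := hclt (l, t) h
        simp only at this
        linarith
      · exact h'
    have hrowt : ∀ l, u l ≠ 0 → ∑ t, z.1 l t = 1 := by
      intro l hl
      have hs : z.2.1 l = 0 := by
        rcases mul_eq_zero.1 (hZ2 l) with h | h
        · exact absurd h hl
        · exact h
      rw [hrow l, hs, sub_zero]
    have hcolt : ∀ t, v t ≠ 0 → ∑ l, z.1 l t = 1 := by
      intro t ht
      have hs : z.2.2 t = 0 := by
        rcases mul_eq_zero.1 (hZ3 t) with h | h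
        · exact absurd h ht
        · exact h
      rw [hcol t, hs, sub_zero]
    have hz_inter : ∀ a ∈ M₁ ∩ M₂, z.1 a.1 a.2 = 1 := by
      intro a ha
      have hrt := hrowt a.1 (by rw [hua a ha]; norm_num)
      have hsingle : ∑ t, z.1 a.1 t = z.1 a.1 a.2 := by
        refine Finset.sum_eq_single a.2 ?_ (fun h => absurd (Finset.mem_univ _) h)
        intro t _ hne
        refine hsupp a.1 t ?_
        intro hmem
        rcases Finset.mem_union.1 hmem with h | h
        · exact hne (matching_row h₁ h (by rw [Prod.mk.eta]; exact (Finset.mem_inter.1 ha).1))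
        · exact hne (matching_row h₂ h (by rw [Prod.mk.eta]; exact (Finset.mem_inter.1 ha).2))
      rw [hsingle] at hrt
      exact hrt
    set lam : ℝ := z.1 (L 0) (T 0) with hlam
    have hcol_i : ∀ i : Fin k,
        z.1 (L i.castSucc) (T i.castSucc) + z.1 (L i.succ) (T i.castSucc) = 1 := by
      intro i
      have hik : ((i.castSucc : Fin (k+1)) : ℝ) < k := by
        have : (i : ℕ) < k := i.isLt
        rw [Fin.coe_castSucc]
        exact_mod_cast this
      have hvpos : v (T i.castSucc) ≠ 0 := by
        rw [hvT i.castSucc]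
        exact ne_of_gt (div_pos (by linarith) hkpos)
      have hct := hcolt _ hvpos
      have hneL : L i.castSucc ≠ L i.succ := fun h => (Fin.castSucc_lt_succ : i.castSucc < i.succ).ne (hL h)
      have hsum2 : ∑ l, z.1 l (T i.castSucc)
          = z.1 (L i.castSucc) (T i.castSucc) + z.1 (L i.succ) (T i.castSucc) := by
        rw [show z.1 (L i.castSucc) (T i.castSucc) + z.1 (L i.succ) (T i.castSucc)
            = ∑ l ∈ ({L i.castSucc, L i.succ} : Finset (Fin nn)), z.1 l (T i.castSucc)
          from (Finset.sum_pair (f := fun l => z.1 l (T i.castSucc)) hneL).symm]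
        refine (Finset.sum_subset (Finset.subset_univ _) ?_).symm
        intro l _ hl
        simp only [Finset.mem_insert, Finset.mem_singleton] at hl
        push_neg at hl
        refine hsupp l _ ?_
        intro hmem
        rcases Finset.mem_union.1 hmem with h | h
        · exact hl.2 (matching_col h₁ h (hold1 i))
        · exact hl.1 (matching_col h₂ h (hnew2 i.castSucc))
      rw [hsum2] at hct
      exact hct
    have hrow_i : ∀ i : Fin k,
        z.1 (L i.succ) (T i.castSucc) + z.1 (L i.succ) (T i.succ) = 1 := by
      intro i
      have hik : (0:ℝ) < ((i.succ : Fin (k+1)) : ℝ) := by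
        rw [Fin.val_succ]
        push_cast
        positivity
      have hupos : u (L i.succ) ≠ 0 := by
        rw [huL i.succ]
        exact ne_of_gt (div_pos hik hkpos)
      have hrt := hrowt _ hupos
      have hneT : T i.castSucc ≠ T i.succ := fun h => (Fin.castSucc_lt_succ : i.castSucc < i.succ).ne (hT h)
      have hsum2 : ∑ t, z.1 (L i.succ) t
          = z.1 (L i.succ) (T i.castSucc) + z.1 (L i.succ) (T i.succ) := by
        rw [show z.1 (L i.succ) (T i.castSucc) + z.1 (L i.succ) (T i.succ)
            = ∑ t ∈ ({T i.castSucc, T i.succ} : Finset (Fin nn)), z.1 (L i.succ) t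
          from (Finset.sum_pair (f := fun t => z.1 (L i.succ) t) hneT).symm]
        refine (Finset.sum_subset (Finset.subset_univ _) ?_).symm
        intro t _ ht
        simp only [Finset.mem_insert, Finset.mem_singleton] at ht
        push_neg at ht
        refine hsupp _ t ?_
        intro hmem
        rcases Finset.mem_union.1 hmem with h | h
        · exact ht.1 (matching_row h₁ h (hold1 i))
        · exact ht.2 (matching_row h₂ h (hnew2 i.succ))
      rw [hsum2] at hrt
      exact hrt
    have hxconst : ∀ i : Fin (k+1), z.1 (L i) (T i) = lam := by
      intro i
      induction i using Fin.induction with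
      | zero => rfl
      | succ i ih =>
        have h1 := hcol_i i
        have h2 := hrow_i i
        linarith
    have hw : ∀ i : Fin k, z.1 (L i.succ) (T i.castSucc) = 1 - lam := by
      intro i
      have h1 := hcol_i i
      have h2 := hxconst i.castSucc
      linarith
    have hl0 : 0 ≤ lam := (hz1 _ _).1
    have hl1 : lam ≤ 1 := (hz1 _ _).2
    refine ⟨1 - lam, lam, by linarith, hl0, by ring, ?_⟩
    have hfst : ∀ l t, (1 - lam) * (if (l, t) ∈ M₁ then (1:ℝ) else 0)
        + lam * (if (l, t) ∈ M₂ then (1:ℝ) else 0) = z.1 l t := by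
      intro l t
      by_cases hm1 : (l, t) ∈ M₁
      · by_cases hm2 : (l, t) ∈ M₂
        · rw [if_pos hm1, if_pos hm2, hz_inter (l, t) (Finset.mem_inter.2 ⟨hm1, hm2⟩)]
          ring
        · have hmem : (l, t) ∈ M₁ \ M₂ := Finset.mem_sdiff.2 ⟨hm1, hm2⟩
          rw [hold] at hmem
          obtain ⟨i, _, hi⟩ := Finset.mem_image.1 hmem
          have hil : L i.succ = l := congrArg Prod.fst hi
          have hit : T i.castSucc = t := congrArg Prod.snd hi
          rw [if_pos hm1, if_neg hm2, ← hil, ← hit, hw i]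
          ring
      · by_cases hm2 : (l, t) ∈ M₂
        · have hmem : (l, t) ∈ M₂ \ M₁ := Finset.mem_sdiff.2 ⟨hm2, hm1⟩
          rw [hnew] at hmem
          obtain ⟨i, _, hi⟩ := Finset.mem_image.1 hmem
          have hil : L i = l := congrArg Prod.fst hi
          have hit : T i = t := congrArg Prod.snd hi
          rw [if_neg hm1, if_pos hm2, ← hil, ← hit, hxconst i]
          ring
        · rw [if_neg hm1, if_neg hm2,
            hsupp l t (fun hm => (Finset.mem_union.1 hm).elim hm1 hm2)]
          ring
    rw [Prod.ext_iff, Prod.ext_iff]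
    refine ⟨?_, ?_, ?_⟩
    · funext l t
      simp only [Prod.fst_add, Prod.smul_fst, Pi.add_apply, Pi.smul_apply, smul_eq_mul,
        vertexOf]
      exact hfst l t
    · funext l
      simp only [Prod.snd_add, Prod.smul_snd, Prod.fst_add, Prod.smul_fst, Pi.add_apply,
        Pi.smul_apply, smul_eq_mul, vertexOf]
      have hsum : ∑ t, z.1 l t
          = (1 - lam) * (∑ t, if (l, t) ∈ M₁ then (1:ℝ) else 0)
            + lam * (∑ t, if (l, t) ∈ M₂ then (1:ℝ) else 0) := by
        rw [Finset.mul_sum, Finset.mul_sum, ← Finset.sum_add_distrib]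
        exact (Finset.sum_congr rfl fun t _ => hfst l t).symm
      have h4 := hrow l
      linarith
    · funext t
      simp only [Prod.snd_add, Prod.smul_snd, Pi.add_apply, Pi.smul_apply, smul_eq_mul,
        vertexOf]
      have hsum : ∑ l, z.1 l t
          = (1 - lam) * (∑ l, if (l, t) ∈ M₁ then (1:ℝ) else 0)
            + lam * (∑ l, if (l, t) ∈ M₂ then (1:ℝ) else 0) := by
        rw [Finset.mul_sum, Finset.mul_sum, ← Finset.sum_add_distrib]
        exact (Finset.sum_congr rfl fun l _ => hfst l t).symm
      have h4 := hcol t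
      linarith
  refine ⟨conj1, conj2, ?_, ?_⟩
  · -- conjunct 3
    intro y₃ hy₃ hne1 hne2
    rw [mem_extremePoints] at hy₃
    obtain ⟨hyF, hext⟩ := hy₃
    rcases lt_or_eq_of_le (key y₃ hyF).1 with h | h
    · exact h
    exfalso
    obtain ⟨a, b, ha, hb, hab, hy⟩ := (key y₃ hyF).2 h
    have ha' : 0 < a := by
      rcases eq_or_lt_of_le ha with h0 | h0
      · exfalso
        apply hne2
        rw [← hy, ← h0, zero_smul, zero_add, (by linarith : b = 1), one_smul]
      · exact h0
    have hb' : 0 < b := by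
      rcases eq_or_lt_of_le hb with h0 | h0
      · exfalso
        apply hne1
        rw [← hy, ← h0, zero_smul, add_zero, (by linarith : a = 1), one_smul]
      · exact h0
    exact hne1 (hext (vertexOf M₁) (vertexOf_mem h₁) (vertexOf M₂) (vertexOf_mem h₂)
      ⟨a, b, ha', hb', hab, hy⟩).1.symm
  · -- conjunct 4
    ext y
    simp only [Set.mem_setOf_eq]
    constructor
    · intro hy
      obtain ⟨a, b, ha, hb, hab, rfl⟩ := hy
      have hyF := convex_assignFace nn (vertexOf_mem h₁) (vertexOf_mem h₂) ha hb hab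
      have hdot : dotc c (a • vertexOf M₁ + b • vertexOf M₂) = ((M₁ ∩ M₂).card : ℝ) + k := by
        rw [dotc_comb, conj1, conj2, ← add_mul, hab, one_mul]
      exact ⟨hyF, fun z hz => hdot ▸ (key z hz).1⟩
    · rintro ⟨hyF, hopt⟩
      have h1 := hopt (vertexOf M₁) (vertexOf_mem h₁)
      rw [conj1] at h1
      exact (key y hyF).2 (le_antisymm (key y hyF).1 h1)
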